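/- arXiv:2106.02759 — 3 statements merged into one kernel-verified Lean document; each statement's English description precedes it below -/
import Mathlib

section
/- Let A = [a₀:a₁] ∈ ℙ¹ and let B₁ = [b_{1,0}:b_{1,1}], …, B_α = [b_{α,0}:b_{α,1}] be α ≥ 1 distinct points of ℙ¹ with b_{i,0} ≠ 0 for all i (i.e., no B_i equals [0:1]), over a field k, and let X = {A×B₁, …, A×B_α} ⊆ ℙ¹ × ℙ¹. Then ⟨I_X, y₀⟩ = ⟨y₀, y₁^{α}, L_A⟩, where L_A = a₁x₀ − a₀x₁. -/
open MvPolynomial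
open scoped Classical

noncomputable section

/-- `ℙ¹` over `k`, as the projectivization of `k²`. A `Finset` of
`P1 k × P1 k` is a finite set of distinct points in `ℙ¹ × ℙ¹`. -/
abbrev P1 (k : Type) [Field k] := Projectivization k (Fin 2 → k)

variable (k : Type) [Field k]

/-- The linear form `a₁x₀ - a₀x₁` of degree `(1,0)` vanishing at `A = [a₀:a₁]`. -/
def lX (A : P1 k) : MvPolynomial (Fin 4) k :=
  C (A.rep 1) * X 0 - C (A.rep 0) * X 1

/-- The linear form `b₁y₀ - b₀y₁` of degree `(0,1)` vanishing at `B = [b₀:b₁]`. -/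
def lY (B : P1 k) : MvPolynomial (Fin 4) k :=
  C (B.rep 1) * X 2 - C (B.rep 0) * X 3

/-- The defining ideal `I_P = ⟨a₁x₀ - a₀x₁, b₁y₀ - b₀y₁⟩` of a point
`P = [a₀:a₁] × [b₀:b₁]` of `ℙ¹ × ℙ¹`. Here `x₀,x₁,y₀,y₁` are `X 0, X 1, X 2, X 3`. -/
def pointIdeal (P : P1 k × P1 k) : Ideal (MvPolynomial (Fin 4) k) :=
  Ideal.span {lX k P.1, lY k P.2}

/-- The defining ideal `I_X = ⋂_{P ∈ X} I_P` of a finite set of points of `ℙ¹ × ℙ¹`. -/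
def IX (Xs : Finset (P1 k × P1 k)) : Ideal (MvPolynomial (Fin 4) k) :=
  ⨅ P ∈ Xs, pointIdeal k P

/-- The irrelevant ideal `B = ⟨x₀y₀, x₀y₁, x₁y₀, x₁y₁⟩`. -/
def Birr : Ideal (MvPolynomial (Fin 4) k) :=
  Ideal.span {X 0 * X 2, X 0 * X 3, X 1 * X 2, X 1 * X 3}

/-- The ideal `⟨x₀, x₁⟩`. -/
def Mx : Ideal (MvPolynomial (Fin 4) k) := Ideal.span {X 0, X 1}

/-- The bidegree-`(i,j)` component `S_{(i,j)}` of `S = k[x₀,x₁,y₀,y₁]`: the `k`-span of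
monomials of degree `i` in `x₀,x₁` and degree `j` in `y₀,y₁`. -/
def bicomp (i j : ℕ) : Submodule k (MvPolynomial (Fin 4) k) :=
  Submodule.span k {f | ∃ m : Fin 4 →₀ ℕ, m 0 + m 1 = i ∧ m 2 + m 3 = j ∧ f = monomial m 1}

/-- The Hilbert function `H_{S/I}(i,j) = dim_k S_{(i,j)} - dim_k (I ∩ S_{(i,j)})`. -/
def hilb (I : Ideal (MvPolynomial (Fin 4) k)) (i j : ℕ) : ℤ :=
  (Module.finrank k (bicomp k i j) : ℤ) -
    (Module.finrank k
      ((Submodule.restrictScalars k I) ⊓ bicomp k i j : Submodule k (MvPolynomial (Fin 4) k)) : ℤ)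

/-- `π₁(X)`, the set of distinct first coordinates of points of `X`. -/
def pi1 (Xs : Finset (P1 k × P1 k)) : Finset (P1 k) := Xs.image Prod.fst

/-- `α_A`, the number of points of `X` whose first coordinate is `A`. -/
def alphaA (Xs : Finset (P1 k × P1 k)) (A : P1 k) : ℕ :=
  (Xs.filter (fun P => P.1 = A)).card

/-- The point `[0:1]` of `ℙ¹`. -/
def pt01 : P1 k := Projectivization.mk k ![0, 1] (by
  intro h
  have := congrFun h 1
  simp at this)

section AuxStmt14

variable {k : Type} [Field k]

lemma vec4_mk0 {γ : Type*} (w0 w1 w2 w3 : γ) (h : 0 < 4) : ![w0,w1,w2,w3] ⟨0,h⟩ = w0 := rfl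
lemma vec4_mk1 {γ : Type*} (w0 w1 w2 w3 : γ) (h : 1 < 4) : ![w0,w1,w2,w3] ⟨1,h⟩ = w1 := rfl
lemma vec4_mk2 {γ : Type*} (w0 w1 w2 w3 : γ) (h : 2 < 4) : ![w0,w1,w2,w3] ⟨2,h⟩ = w2 := rfl
lemma vec4_mk3 {γ : Type*} (w0 w1 w2 w3 : γ) (h : 3 < 4) : ![w0,w1,w2,w3] ⟨3,h⟩ = w3 := rfl
lemma vec2_mk0 {γ : Type*} (w0 w1 : γ) (h : 0 < 2) : ![w0,w1] ⟨0,h⟩ = w0 := rfl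
lemma vec2_mk1 {γ : Type*} (w0 w1 : γ) (h : 1 < 2) : ![w0,w1] ⟨1,h⟩ = w1 := rfl
lemma fin4_mk0 (h : 0 < 4) : (⟨0, h⟩ : Fin 4) = 0 := rfl
lemma fin4_mk1 (h : 1 < 4) : (⟨1, h⟩ : Fin 4) = 1 := rfl
lemma fin4_mk2 (h : 2 < 4) : (⟨2, h⟩ : Fin 4) = 2 := rfl
lemma fin4_mk3 (h : 3 < 4) : (⟨3, h⟩ : Fin 4) = 3 := rfl
lemma fin2_mk0 (h : 0 < 2) : (⟨0, h⟩ : Fin 2) = 0 := rfl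
lemma fin2_mk1 (h : 1 < 2) : (⟨1, h⟩ : Fin 2) = 1 := rfl

/-- If an algebra endomorphism moves every variable by an element of `I`,
then it moves every polynomial by an element of `I`. -/
lemma sub_algHom_mem (I : Ideal (MvPolynomial (Fin 4) k))
    (φ : MvPolynomial (Fin 4) k →ₐ[k] MvPolynomial (Fin 4) k)
    (hX : ∀ n : Fin 4, X n - φ (X n) ∈ I) :
    ∀ f : MvPolynomial (Fin 4) k, f - φ f ∈ I := by
  intro f
  induction f using MvPolynomial.induction_on with
  | C a => simp
  | add p q hp hq =>
      have h : p + q - φ (p + q) = (p - φ p) + (q - φ q) := by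
        rw [map_add]; ring
      rw [h]; exact add_mem hp hq
  | mul_X p n hp =>
      have h : p * X n - φ (p * X n) =
          p * (X n - φ (X n)) + (p - φ p) * φ (X n) := by
        rw [map_mul]; ring
      rw [h]
      exact add_mem (Ideal.mul_mem_left _ _ (hX n)) (Ideal.mul_mem_right _ _ hp)

/-- The parametrization map `x₀ ↦ a₀s, x₁ ↦ a₁s, y₀ ↦ b₀t, y₁ ↦ b₁t`. -/
def psiK (a0 a1 b0 b1 : k) :
    MvPolynomial (Fin 4) k →ₐ[k] MvPolynomial (Fin 2) k :=
  aeval ![C a0 * X 0, C a1 * X 0, C b0 * X 1, C b1 * X 1]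

/-- A section of the parametrization map. -/
def iotaK (c0 c1 d0 d1 : k) :
    MvPolynomial (Fin 2) k →ₐ[k] MvPolynomial (Fin 4) k :=
  aeval ![C c0 * X 0 + C c1 * X 1, C d0 * X 2 + C d1 * X 3]

lemma span_pair_eq_ker (a0 a1 c0 c1 b0 b1 d0 d1 : k)
    (hA : c0 * a0 + c1 * a1 = 1) (hBc : d0 * b0 + d1 * b1 = 1) :
    Ideal.span {(C a1 * X 0 - C a0 * X 1 : MvPolynomial (Fin 4) k),
        C b1 * X 2 - C b0 * X 3} =
      RingHom.ker (psiK a0 a1 b0 b1) := by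
  have hA' : C c0 * C a0 + C c1 * C a1 = (1 : MvPolynomial (Fin 4) k) := by
    rw [← C_mul, ← C_mul, ← C_add, hA, C_1]
  have hB' : C d0 * C b0 + C d1 * C b1 = (1 : MvPolynomial (Fin 4) k) := by
    rw [← C_mul, ← C_mul, ← C_add, hBc, C_1]
  apply le_antisymm
  · rw [Ideal.span_le]
    rintro p hp
    simp only [Set.mem_insert_iff, Set.mem_singleton_iff] at hp
    rcases hp with rfl | rfl <;>
      · simp only [AlgHom.comp_apply, psiK, iotaK, map_mul, map_add, map_sub, map_neg,
          aeval_X, aeval_C, algebraMap_eq, Matrix.cons_val_zero, Matrix.cons_val_one,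
          Matrix.head_cons, Matrix.cons_val_succ, vec4_mk0, vec4_mk1, vec4_mk2, vec4_mk3,
          vec2_mk0, vec2_mk1, fin4_mk0, fin4_mk1, fin4_mk2, fin4_mk3, fin2_mk0, fin2_mk1,
          Matrix.cons_val_two, Matrix.cons_val_three, Matrix.vecHead, Matrix.vecTail,
          Function.comp, SetLike.mem_coe, RingHom.mem_ker, mul_zero, zero_sub]
        ring
  · intro f hf
    rw [RingHom.mem_ker] at hf
    have key := sub_algHom_mem
      (Ideal.span {(C a1 * X 0 - C a0 * X 1 : MvPolynomial (Fin 4) k),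
        C b1 * X 2 - C b0 * X 3})
      ((iotaK c0 c1 d0 d1).comp (psiK a0 a1 b0 b1)) ?_ f
    · rwa [AlgHom.comp_apply, hf, map_zero, sub_zero] at key
    · intro n
      rw [Ideal.mem_span_pair]
      fin_cases n
      · refine ⟨C c1, 0, ?_⟩
        simp only [AlgHom.comp_apply, psiK, iotaK, map_mul, map_add, map_sub, map_neg,
          aeval_X, aeval_C, algebraMap_eq, Matrix.cons_val_zero, Matrix.cons_val_one,
          Matrix.head_cons, Matrix.cons_val_succ, vec4_mk0, vec4_mk1, vec4_mk2, vec4_mk3,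
          vec2_mk0, vec2_mk1, fin4_mk0, fin4_mk1, fin4_mk2, fin4_mk3, fin2_mk0, fin2_mk1,
          Matrix.cons_val_two, Matrix.cons_val_three, Matrix.vecHead, Matrix.vecTail,
          Function.comp, SetLike.mem_coe, RingHom.mem_ker, mul_zero, zero_sub]
        linear_combination (X 0 : MvPolynomial (Fin 4) k) * hA'
      · refine ⟨-C c0, 0, ?_⟩
        simp only [AlgHom.comp_apply, psiK, iotaK, map_mul, map_add, map_sub, map_neg,
          aeval_X, aeval_C, algebraMap_eq, Matrix.cons_val_zero, Matrix.cons_val_one,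
          Matrix.head_cons, Matrix.cons_val_succ, vec4_mk0, vec4_mk1, vec4_mk2, vec4_mk3,
          vec2_mk0, vec2_mk1, fin4_mk0, fin4_mk1, fin4_mk2, fin4_mk3, fin2_mk0, fin2_mk1,
          Matrix.cons_val_two, Matrix.cons_val_three, Matrix.vecHead, Matrix.vecTail,
          Function.comp, SetLike.mem_coe, RingHom.mem_ker, mul_zero, zero_sub]
        linear_combination (X 1 : MvPolynomial (Fin 4) k) * hA'
      · refine ⟨0, C d1, ?_⟩
        simp only [AlgHom.comp_apply, psiK, iotaK, map_mul, map_add, map_sub, map_neg,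
          aeval_X, aeval_C, algebraMap_eq, Matrix.cons_val_zero, Matrix.cons_val_one,
          Matrix.head_cons, Matrix.cons_val_succ, vec4_mk0, vec4_mk1, vec4_mk2, vec4_mk3,
          vec2_mk0, vec2_mk1, fin4_mk0, fin4_mk1, fin4_mk2, fin4_mk3, fin2_mk0, fin2_mk1,
          Matrix.cons_val_two, Matrix.cons_val_three, Matrix.vecHead, Matrix.vecTail,
          Function.comp, SetLike.mem_coe, RingHom.mem_ker, mul_zero, zero_sub]
        linear_combination (X 2 : MvPolynomial (Fin 4) k) * hB'
      · refine ⟨0, -C d0, ?_⟩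
        simp only [AlgHom.comp_apply, psiK, iotaK, map_mul, map_add, map_sub, map_neg,
          aeval_X, aeval_C, algebraMap_eq, Matrix.cons_val_zero, Matrix.cons_val_one,
          Matrix.head_cons, Matrix.cons_val_succ, vec4_mk0, vec4_mk1, vec4_mk2, vec4_mk3,
          vec2_mk0, vec2_mk1, fin4_mk0, fin4_mk1, fin4_mk2, fin4_mk3, fin2_mk0, fin2_mk1,
          Matrix.cons_val_two, Matrix.cons_val_three, Matrix.vecHead, Matrix.vecTail,
          Function.comp, SetLike.mem_coe, RingHom.mem_ker, mul_zero, zero_sub]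
        linear_combination (X 3 : MvPolynomial (Fin 4) k) * hB'

lemma exists_combo {a0 a1 : k} (ha : a0 ≠ 0 ∨ a1 ≠ 0) :
    ∃ c0 c1 : k, c0 * a0 + c1 * a1 = 1 := by
  rcases ha with h | h
  · exact ⟨a0⁻¹, 0, by field_simp; ring⟩
  · exact ⟨0, a1⁻¹, by field_simp; ring⟩

lemma span_pair_isPrime (a0 a1 b0 b1 : k) (ha : a0 ≠ 0 ∨ a1 ≠ 0) (hb : b0 ≠ 0) :
    (Ideal.span {(C a1 * X 0 - C a0 * X 1 : MvPolynomial (Fin 4) k),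
      C b1 * X 2 - C b0 * X 3}).IsPrime := by
  obtain ⟨c0, c1, hc⟩ := exists_combo ha
  rw [span_pair_eq_ker a0 a1 c0 c1 b0 b1 b0⁻¹ 0 hc (by field_simp; ring)]
  exact RingHom.ker_isPrime _

lemma not_mem_span_pair (a0 a1 b0 b1 : k) (ha : a0 ≠ 0 ∨ a1 ≠ 0) (hb : b0 ≠ 0)
    (b0' b1' : k) (hdet : b1' * b0 - b0' * b1 ≠ 0) :
    (C b1' * X 2 - C b0' * X 3 : MvPolynomial (Fin 4) k) ∉
      Ideal.span {(C a1 * X 0 - C a0 * X 1 : MvPolynomial (Fin 4) k),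
        C b1 * X 2 - C b0 * X 3} := by
  obtain ⟨c0, c1, hc⟩ := exists_combo ha
  rw [span_pair_eq_ker a0 a1 c0 c1 b0 b1 b0⁻¹ 0 hc (by field_simp; ring)]
  intro h
  rw [RingHom.mem_ker] at h
  have himg : (psiK a0 a1 b0 b1) (C b1' * X 2 - C b0' * X 3 : MvPolynomial (Fin 4) k) =
      C (b1' * b0 - b0' * b1) * X 1 := by
    simp only [AlgHom.comp_apply, psiK, iotaK, map_mul, map_add, map_sub, map_neg,
          aeval_X, aeval_C, algebraMap_eq, Matrix.cons_val_zero, Matrix.cons_val_one,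
          Matrix.head_cons, Matrix.cons_val_succ, vec4_mk0, vec4_mk1, vec4_mk2, vec4_mk3,
          vec2_mk0, vec2_mk1, fin4_mk0, fin4_mk1, fin4_mk2, fin4_mk3, fin2_mk0, fin2_mk1,
          Matrix.cons_val_two, Matrix.cons_val_three, Matrix.vecHead, Matrix.vecTail,
          Function.comp, SetLike.mem_coe, RingHom.mem_ker, mul_zero, zero_sub]
    ring
  rw [himg] at h
  rcases mul_eq_zero.mp h with h' | h'
  · exact hdet (by rwa [← C_eq_zero])
  · exact X_ne_zero _ h'

lemma rep0_ne_zero {v : P1 k} (h : v ≠ pt01 k) : v.rep 0 ≠ 0 := by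
  intro h0
  apply h
  have hv := v.rep_nonzero
  have h1 : v.rep 1 ≠ 0 := by
    intro h1
    apply hv
    funext i
    fin_cases i <;> assumption
  conv_lhs => rw [← v.mk_rep]
  rw [pt01, Projectivization.mk_eq_mk_iff]
  refine ⟨Units.mk0 (v.rep 1) h1, ?_⟩
  funext i
  fin_cases i
  · simp only [Units.smul_def, Units.val_mk0, Pi.smul_apply, smul_eq_mul,
      Matrix.cons_val_zero, mul_zero, fin2_mk0, fin2_mk1, vec2_mk0, vec2_mk1]
    exact h0.symm
  · simp only [Units.smul_def, Units.val_mk0, Pi.smul_apply, smul_eq_mul,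
      Matrix.cons_val_one, Matrix.head_cons, mul_one, fin2_mk0, fin2_mk1, vec2_mk0, vec2_mk1,
      Matrix.cons_val_fin_one]

lemma det_ne_zero {u v : P1 k} (hu : u.rep 0 ≠ 0) (hv : v.rep 0 ≠ 0) (h : u ≠ v) :
    v.rep 1 * u.rep 0 - v.rep 0 * u.rep 1 ≠ 0 := by
  intro heq
  apply h
  conv_lhs => rw [← u.mk_rep]
  conv_rhs => rw [← v.mk_rep]
  rw [Projectivization.mk_eq_mk_iff']
  refine ⟨u.rep 0 / v.rep 0, ?_⟩
  funext i
  fin_cases i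
  · simp only [Pi.smul_apply, smul_eq_mul, fin2_mk0, fin2_mk1]
    field_simp
  · simp only [Pi.smul_apply, smul_eq_mul, fin2_mk0, fin2_mk1]
    field_simp
    linear_combination heq

lemma mem_span_pair_prod {n : ℕ} (L : MvPolynomial (Fin 4) k)
    (P : Fin n → MvPolynomial (Fin 4) k)
    (hprime : ∀ i, (Ideal.span {L, P i}).IsPrime)
    (hnm : ∀ i j, j ≠ i → P j ∉ Ideal.span {L, P i})
    (f : MvPolynomial (Fin 4) k) (s : Finset (Fin n))
    (hf : ∀ i ∈ s, f ∈ Ideal.span {L, P i}) :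
    f ∈ Ideal.span {L, ∏ i ∈ s, P i} := by
  classical
  induction s using Finset.induction_on with
  | empty =>
      rw [Ideal.mem_span_pair]
      exact ⟨0, f, by rw [Finset.prod_empty]; ring⟩
  | @insert a s ha ih =>
      have hfa : f ∈ Ideal.span {L, P a} := hf a (Finset.mem_insert_self a s)
      obtain ⟨g, h, hgh⟩ := Ideal.mem_span_pair.mp
        (ih fun i hi => hf i (Finset.mem_insert_of_mem hi))
      have h1 : h * ∏ i ∈ s, P i ∈ Ideal.span {L, P a} := by
        have he : h * ∏ i ∈ s, P i = f - g * L := by linear_combination hgh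
        rw [he]
        exact sub_mem hfa
          (Ideal.mul_mem_left _ g (Ideal.subset_span (Set.mem_insert _ _)))
      have hPs : (∏ i ∈ s, P i) ∉ Ideal.span {L, P a} := by
        intro hmem
        haveI := hprime a
        obtain ⟨j, hj, hjmem⟩ := Ideal.IsPrime.prod_mem_iff.mp hmem
        exact hnm a j (by rintro rfl; exact ha hj) hjmem
      have hh : h ∈ Ideal.span {L, P a} :=
        ((hprime a).mem_or_mem h1).resolve_right hPs
      obtain ⟨g', h', hgh'⟩ := Ideal.mem_span_pair.mp hh
      rw [Ideal.mem_span_pair]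
      refine ⟨g + g' * ∏ i ∈ s, P i, h', ?_⟩
      rw [Finset.prod_insert ha]
      linear_combination hgh + (∏ i ∈ s, P i) * hgh'

end AuxStmt14


/-- for `X = {A×B₁, …, A×B_α}` with `α ≥ 1`, the `B_i` distinct and no
`B_i` equal to `[0:1]`, we have `⟨I_X, y₀⟩ = ⟨y₀, y₁^α, L_A⟩`. -/
theorem stmt14 [CharZero k] (A : P1 k) (α : ℕ) (hα : 1 ≤ α) (B : Fin α → P1 k)
    (hB : Function.Injective B) (h01 : ∀ i, B i ≠ pt01 k) :
    IX k (Finset.univ.image (fun i => (A, B i))) ⊔ Ideal.span {X 2} =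
      Ideal.span {X 2, X 3 ^ α, lX k A} := by
  classical
  set a0 := A.rep 0 with ha0
  set a1 := A.rep 1 with ha1
  have ha : a0 ≠ 0 ∨ a1 ≠ 0 := by
    by_contra hcon
    push_neg at hcon
    exact A.rep_nonzero (by funext i; fin_cases i <;> simp [← ha0, ← ha1, hcon.1, hcon.2])
  have hb0 : ∀ i, (B i).rep 0 ≠ 0 := fun i => rep0_ne_zero (h01 i)
  set L := lX k A with hL
  set P : Fin α → MvPolynomial (Fin 4) k := fun i => lY k (B i) with hP
  have hLdef : L = C a1 * X 0 - C a0 * X 1 := rfl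
  have hPdef : ∀ i, P i = C ((B i).rep 1) * X 2 - C ((B i).rep 0) * X 3 := fun _ => rfl
  have hprime : ∀ i, (Ideal.span {L, P i}).IsPrime := by
    intro i
    rw [hLdef, hPdef i]
    exact span_pair_isPrime a0 a1 _ _ ha (hb0 i)
  have hnm : ∀ i j, j ≠ i → P j ∉ Ideal.span {L, P i} := by
    intro i j hij
    rw [hLdef, hPdef i, hPdef j]
    exact not_mem_span_pair a0 a1 _ _ ha (hb0 i) _ _
      (det_ne_zero (hb0 i) (hb0 j) (fun h => hij (hB h).symm))
  set Q := ∏ i, P i with hQ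
  set θ : MvPolynomial (Fin 4) k →ₐ[k] MvPolynomial (Fin 4) k :=
    aeval ![X 0, X 1, 0, X 3] with hθ
  have hθsub : ∀ f : MvPolynomial (Fin 4) k,
      f - θ f ∈ Ideal.span {(X 2 : MvPolynomial (Fin 4) k)} := by
    apply sub_algHom_mem
    intro n
    fin_cases n <;>
        simp only [hθ, aeval_X, Matrix.cons_val_zero, Matrix.cons_val_one, Matrix.head_cons,
          Matrix.cons_val_two, Matrix.cons_val_three, Matrix.vecHead, Matrix.vecTail,
          Function.comp, Matrix.cons_val_succ, vec4_mk0, vec4_mk1, vec4_mk2, vec4_mk3,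
          fin4_mk0, fin4_mk1, fin4_mk2, fin4_mk3, sub_self] <;>
      first
        | exact zero_mem _
        | (rw [sub_zero]; exact Ideal.subset_span rfl)
  set c := ∏ i, -((B i).rep 0) with hc
  have hcne : c ≠ 0 :=
    Finset.prod_ne_zero_iff.mpr fun i _ => neg_ne_zero.mpr (hb0 i)
  have hθQ : θ Q = C c * X 3 ^ α := by
    rw [hQ, map_prod]
    have hPi : ∀ i, θ (P i) = C (-((B i).rep 0)) * X 3 := by
      intro i
      rw [hPdef i]
      simp only [AlgHom.comp_apply, psiK, iotaK, hθ, map_mul, map_add, map_sub, map_neg,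
          aeval_X, aeval_C, algebraMap_eq, Matrix.cons_val_zero, Matrix.cons_val_one,
          Matrix.head_cons, Matrix.cons_val_succ, vec4_mk0, vec4_mk1, vec4_mk2, vec4_mk3,
          vec2_mk0, vec2_mk1, fin4_mk0, fin4_mk1, fin4_mk2, fin4_mk3, fin2_mk0, fin2_mk1,
          Matrix.cons_val_two, Matrix.cons_val_three, Matrix.vecHead, Matrix.vecTail,
          Function.comp, SetLike.mem_coe, RingHom.mem_ker, mul_zero, zero_sub]
      ring
    simp_rw [hPi]
    rw [Finset.prod_mul_distrib, Finset.prod_const, ← map_prod, Finset.card_univ,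
      Fintype.card_fin, hc]
  have hmemIX : ∀ f, f ∈ IX k (Finset.univ.image fun i => (A, B i)) ↔
      ∀ i, f ∈ Ideal.span {L, P i} := by
    intro f
    simp only [IX, Submodule.mem_iInf]
    constructor
    · intro h i
      exact h (A, B i) (Finset.mem_image.mpr ⟨i, Finset.mem_univ i, rfl⟩)
    · rintro h Pt hPt
      obtain ⟨i, -, rfl⟩ := Finset.mem_image.mp hPt
      exact h i
  apply le_antisymm
  · apply sup_le
    · intro f hf
      have hf' : ∀ i, f ∈ Ideal.span {L, P i} := (hmemIX f).mp hf
      have hfQ : f ∈ Ideal.span {L, Q} := by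
        have hmem := mem_span_pair_prod L P hprime hnm f Finset.univ fun i _ => hf' i
        rw [hQ]
        exact hmem
      obtain ⟨g, h, hgh⟩ := Ideal.mem_span_pair.mp hfQ
      have hLmem : L ∈ Ideal.span {(X 2 : MvPolynomial (Fin 4) k), X 3 ^ α, L} :=
        Ideal.subset_span (by simp)
      have hQmem : Q ∈ Ideal.span {(X 2 : MvPolynomial (Fin 4) k), X 3 ^ α, L} := by
        have h2 : Ideal.span {(X 2 : MvPolynomial (Fin 4) k)} ≤
            Ideal.span {X 2, X 3 ^ α, L} := Ideal.span_mono (by simp)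
        have h3 : θ Q ∈ Ideal.span {(X 2 : MvPolynomial (Fin 4) k), X 3 ^ α, L} := by
          rw [hθQ]
          exact Ideal.mul_mem_left _ _ (Ideal.subset_span (by simp))
        have hsplit : Q = (Q - θ Q) + θ Q := by ring
        rw [hsplit]
        exact add_mem (h2 (hθsub Q)) h3
      rw [← hgh]
      exact add_mem (Ideal.mul_mem_left _ g hLmem) (Ideal.mul_mem_left _ h hQmem)
    · rw [Ideal.span_singleton_le_iff_mem]
      exact Ideal.subset_span (by simp)
  · have hQIX : Q ∈ IX k (Finset.univ.image fun i => (A, B i)) := by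
      refine (hmemIX Q).mpr fun i => ?_
      rw [hQ, ← Finset.mul_prod_erase Finset.univ P (Finset.mem_univ i)]
      exact Ideal.mul_mem_right _ _ (Ideal.subset_span (by simp))
    have hLIX : L ∈ IX k (Finset.univ.image fun i => (A, B i)) :=
      (hmemIX L).mpr fun i => Ideal.subset_span (by simp)
    have hθQmem : θ Q ∈ IX k (Finset.univ.image fun i => (A, B i)) ⊔
        Ideal.span {(X 2 : MvPolynomial (Fin 4) k)} := by
      have hsplit : θ Q = Q - (Q - θ Q) := by ring
      rw [hsplit]
      exact sub_mem (Ideal.mem_sup_left hQIX) (Ideal.mem_sup_right (hθsub Q))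
    have hX3α : (X 3 : MvPolynomial (Fin 4) k) ^ α ∈
        IX k (Finset.univ.image fun i => (A, B i)) ⊔
          Ideal.span {(X 2 : MvPolynomial (Fin 4) k)} := by
      have h2 : C c⁻¹ * θ Q = X 3 ^ α := by
        rw [hθQ, ← mul_assoc, ← C_mul, inv_mul_cancel₀ hcne, C_1, one_mul]
      rw [← h2]
      exact Ideal.mul_mem_left _ _ hθQmem
    rw [Ideal.span_le]
    rintro p hp
    simp only [Set.mem_insert_iff, Set.mem_singleton_iff] at hp
    rcases hp with rfl | rfl | rfl
    · exact SetLike.mem_coe.mpr (Ideal.mem_sup_right (Ideal.subset_span rfl))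
    · exact SetLike.mem_coe.mpr hX3α
    · exact SetLike.mem_coe.mpr (Ideal.mem_sup_left hLIX)


end
end

section
/- Let k be a field, let α ≥ 1 be an integer, and let (a₀,a₁) ∈ k² be a nonzero vector. Then the ideal ⟨y₀, y₁^{α}, a₁x₀ − a₀x₁⟩ of S = k[x₀,x₁,y₀,y₁] is a primary ideal. -/
open MvPolynomial

section Aux

variable {k : Type} [Field k]

private lemma primeX3 : Prime (X 3 : MvPolynomial (Fin 4) k) := by
  have h0 : Prime (X 0 : MvPolynomial (Fin 4) k) := by
    refine (MulEquiv.prime_iff (MvPolynomial.finSuccEquiv k 3).toMulEquiv).mp ?_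
    show Prime ((MvPolynomial.finSuccEquiv k 3) (X 0))
    rw [finSuccEquiv_X_zero]
    exact Polynomial.prime_X
  have := (MulEquiv.prime_iff (MvPolynomial.renameEquiv k (Equiv.swap (0 : Fin 4) 3)).toMulEquiv).mpr h0
  simpa [renameEquiv_apply, rename_X] using this

private lemma sub_mem_of_gen (ψ : MvPolynomial (Fin 4) k →ₐ[k] MvPolynomial (Fin 4) k)
    (J : Ideal (MvPolynomial (Fin 4) k)) (hg : ∀ i, X i - ψ (X i) ∈ J) :
    ∀ f, f - ψ f ∈ J := by
  intro f
  induction f using MvPolynomial.induction_on with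
  | C a => simp
  | add p q hp hq =>
    have e : p + q - ψ (p + q) = (p - ψ p) + (q - ψ q) := by rw [map_add]; ring
    rw [e]; exact J.add_mem hp hq
  | mul_X p i hp =>
    have e : p * X i - ψ (p * X i) = (p - ψ p) * X i + ψ p * (X i - ψ (X i)) := by
      rw [map_mul]; ring
    rw [e]
    exact J.add_mem (J.mul_mem_right _ hp) (J.mul_mem_left _ (hg i))

private lemma key (α : ℕ) (hα : 1 ≤ α) (ℓ : MvPolynomial (Fin 4) k)
    (ψ : MvPolynomial (Fin 4) k →ₐ[k] MvPolynomial (Fin 4) k)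
    (hg : ∀ i, X i - ψ (X i) ∈ Ideal.span {X 2, ℓ})
    (hψ2 : ψ (X 2) = 0) (hψℓ : ψ ℓ = 0) (hψ3 : ψ (X 3) = X 3) :
    (Ideal.span {X 2, X 3 ^ α, ℓ} : Ideal (MvPolynomial (Fin 4) k)).IsPrimary := by
  set I : Ideal (MvPolynomial (Fin 4) k) := Ideal.span {X 2, X 3 ^ α, ℓ} with hI
  set Q : Ideal (MvPolynomial (Fin 4) k) :=
    Ideal.span {(X 3 : MvPolynomial (Fin 4) k) ^ α} with hQ
  have hJI : Ideal.span {(X 2 : MvPolynomial (Fin 4) k), ℓ} ≤ I := by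
    rw [Ideal.span_le]
    intro x hx
    rcases hx with hx | hx
    · exact Ideal.subset_span (by simp [hx])
    · simp only [Set.mem_singleton_iff] at hx
      exact Ideal.subset_span (by simp [hx])
  have hQI : Q ≤ I := by
    rw [hQ, Ideal.span_le]
    intro x hx
    simp only [Set.mem_singleton_iff] at hx
    exact Ideal.subset_span (by simp [hx])
  have hmap : ∀ f ∈ I, ψ f ∈ Q := by
    intro f hf
    have hle : Ideal.map ψ.toRingHom I ≤ Q := by
      rw [hI, Ideal.map_span, Ideal.span_le]
      rintro x ⟨y, hy, rfl⟩
      rcases hy with hy | hy | hy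
      · simp only [hy]; show ψ (X 2) ∈ Q; rw [hψ2]; exact Q.zero_mem
      · simp only [hy]; show ψ (X 3 ^ α) ∈ Q
        rw [map_pow, hψ3]; exact Ideal.subset_span rfl
      · simp only [Set.mem_singleton_iff] at hy
        simp only [hy]; show ψ ℓ ∈ Q; rw [hψℓ]; exact Q.zero_mem
    exact hle (Ideal.mem_map_of_mem _ hf)
  have hmem : ∀ f : MvPolynomial (Fin 4) k, ψ f ∈ Q → f ∈ I := by
    intro f hf
    have e : f = (f - ψ f) + ψ f := by ring
    rw [e]
    exact I.add_mem (hJI (sub_mem_of_gen ψ _ hg f)) (hQI hf)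
  rw [Ideal.isPrimary_iff]
  constructor
  · intro ht
    have h1 : (1 : MvPolynomial (Fin 4) k) ∈ I := by rw [ht]; exact Submodule.mem_top
    have h2 := hmap 1 h1
    rw [map_one, hQ, Ideal.mem_span_singleton] at h2
    have hdvd : (X 3 : MvPolynomial (Fin 4) k) ∣ 1 :=
      dvd_trans (dvd_pow_self _ (by omega)) h2
    exact primeX3.not_unit (isUnit_of_dvd_one hdvd)
  · intro a b hab
    have hab' : ψ a * ψ b ∈ Q := by rw [← map_mul]; exact hmap _ hab
    by_cases hX : (X 3 : MvPolynomial (Fin 4) k) ∣ ψ b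
    · right
      rw [Ideal.mem_radical_iff]
      refine ⟨α, hmem _ ?_⟩
      rw [map_pow, hQ, Ideal.mem_span_singleton]
      exact pow_dvd_pow_of_dvd hX α
    · left
      refine hmem _ ?_
      rw [hQ, Ideal.mem_span_singleton]
      rw [hQ, Ideal.mem_span_singleton] at hab'
      exact (primeX3).pow_dvd_of_dvd_mul_right α hX hab'

end Aux

/-- for a field `k`, an integer `α ≥ 1` and a nonzero vector `(a₀,a₁) ∈ k²`,
the ideal `⟨y₀, y₁^α, a₁x₀ − a₀x₁⟩` of `S = k[x₀,x₁,y₀,y₁]` is primary.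
Here `x₀,x₁,y₀,y₁` are `X 0, X 1, X 2, X 3`. -/
theorem stmt15 (k : Type) [Field k] [CharZero k] (α : ℕ) (hα : 1 ≤ α)
    (a₀ a₁ : k) (h : (a₀, a₁) ≠ (0, 0)) :
    (Ideal.span {X 2, X 3 ^ α, C a₁ * X 0 - C a₀ * X 1} :
      Ideal (MvPolynomial (Fin 4) k)).IsPrimary := by
  have hcases : a₁ ≠ 0 ∨ a₀ ≠ 0 := by
    by_contra hc
    push_neg at hc
    exact h (by simp [hc.1, hc.2, Prod.ext_iff])
  set ℓ : MvPolynomial (Fin 4) k := C a₁ * X 0 - C a₀ * X 1 with hℓ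
  rcases hcases with h1 | h0
  · -- a₁ ≠ 0
    set ψ : MvPolynomial (Fin 4) k →ₐ[k] MvPolynomial (Fin 4) k :=
      aeval ![C (a₀ / a₁) * X 1, X 1, 0, X 3] with hψ
    have hψ0 : ψ (X 0) = C (a₀ / a₁) * X 1 := by simp [hψ]
    have hψ1 : ψ (X 1) = X 1 := by simp [hψ]
    have hψ2 : ψ (X 2) = 0 := by simp [hψ]
    have hψ3 : ψ (X 3) = X 3 := by simp [hψ]
    refine key α hα ℓ ψ ?_ hψ2 ?_ hψ3
    · have m0 : X 0 - ψ (X 0) ∈ Ideal.span {(X 2 : MvPolynomial (Fin 4) k), ℓ} := by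
        have e : X 0 - ψ (X 0) = C a₁⁻¹ * ℓ := by
          rw [hψ0, hℓ, mul_sub, ← mul_assoc, ← C_mul, inv_mul_cancel₀ h1, C_1, one_mul,
            ← mul_assoc, ← C_mul, div_eq_mul_inv, mul_comm a₁⁻¹ a₀]
        rw [e]
        exact Ideal.mul_mem_left _ _ (Ideal.subset_span (by simp))
      have m1 : X 1 - ψ (X 1) ∈ Ideal.span {(X 2 : MvPolynomial (Fin 4) k), ℓ} := by
        rw [hψ1, sub_self]; exact Ideal.zero_mem _
      have m2 : X 2 - ψ (X 2) ∈ Ideal.span {(X 2 : MvPolynomial (Fin 4) k), ℓ} := by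
        rw [hψ2, sub_zero]; exact Ideal.subset_span (by simp)
      have m3 : X 3 - ψ (X 3) ∈ Ideal.span {(X 2 : MvPolynomial (Fin 4) k), ℓ} := by
        rw [hψ3, sub_self]; exact Ideal.zero_mem _
      intro i
      fin_cases i
      exacts [m0, m1, m2, m3]
    · rw [hℓ, map_sub, map_mul, map_mul, hψ0, hψ1]
      have : ψ (C a₁) = C a₁ := by simp [hψ, algebraMap_eq]
      rw [this]
      have : ψ (C a₀) = C a₀ := by simp [hψ, algebraMap_eq]
      rw [this, ← mul_assoc, ← C_mul, mul_div_cancel₀ _ h1]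
      ring
  · -- a₀ ≠ 0
    set ψ : MvPolynomial (Fin 4) k →ₐ[k] MvPolynomial (Fin 4) k :=
      aeval ![X 0, C (a₁ / a₀) * X 0, 0, X 3] with hψ
    have hψ0 : ψ (X 0) = X 0 := by simp [hψ]
    have hψ1 : ψ (X 1) = C (a₁ / a₀) * X 0 := by simp [hψ]
    have hψ2 : ψ (X 2) = 0 := by simp [hψ]
    have hψ3 : ψ (X 3) = X 3 := by simp [hψ]
    refine key α hα ℓ ψ ?_ hψ2 ?_ hψ3
    · have m0 : X 0 - ψ (X 0) ∈ Ideal.span {(X 2 : MvPolynomial (Fin 4) k), ℓ} := by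
        rw [hψ0, sub_self]; exact Ideal.zero_mem _
      have m1 : X 1 - ψ (X 1) ∈ Ideal.span {(X 2 : MvPolynomial (Fin 4) k), ℓ} := by
        have e : X 1 - ψ (X 1) = -C a₀⁻¹ * ℓ := by
          rw [hψ1, hℓ, neg_mul, mul_sub, ← mul_assoc, ← C_mul, ← mul_assoc, ← C_mul,
            inv_mul_cancel₀ h0, C_1, one_mul, div_eq_mul_inv, mul_comm a₀⁻¹ a₁]
          ring
        rw [e]
        exact Ideal.mul_mem_left _ _ (Ideal.subset_span (by simp))
      have m2 : X 2 - ψ (X 2) ∈ Ideal.span {(X 2 : MvPolynomial (Fin 4) k), ℓ} := by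
        rw [hψ2, sub_zero]; exact Ideal.subset_span (by simp)
      have m3 : X 3 - ψ (X 3) ∈ Ideal.span {(X 2 : MvPolynomial (Fin 4) k), ℓ} := by
        rw [hψ3, sub_self]; exact Ideal.zero_mem _
      intro i
      fin_cases i
      exacts [m0, m1, m2, m3]
    · rw [hℓ, map_sub, map_mul, map_mul, hψ0, hψ1]
      have : ψ (C a₁) = C a₁ := by simp [hψ, algebraMap_eq]
      rw [this]
      have : ψ (C a₀) = C a₀ := by simp [hψ, algebraMap_eq]
      rw [this, ← mul_assoc, ← C_mul, mul_div_cancel₀ _ h0]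
      ring
end

section
/- Let X be a finite set of distinct points in ℙ¹ × ℙ¹ over a field k such that no point of X has second coordinate [0:1] (so that y₀ is a non-zero-divisor on S/I_X). Let i, j ∈ ℕ with i ≥ |π₁(X)| − 1, and let F ∈ S be bihomogeneous of degree (i,j). If F ∈ ⟨y₀, L_A⟩ for every A ∈ π₁(X) with α_A ≥ j+1 (where L_A = a₁x₀ − a₀x₁ if A = [a₀:a₁]), then F ∈ ⟨I_X, y₀⟩. -/
open MvPolynomial
open scoped Classical

noncomputable section

variable (k : Type) [Field k]

-- ========== auxiliary definitions and lemmas ==========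

def aux_sig : MvPolynomial (Fin 4) k →ₐ[k] MvPolynomial (Fin 4) k :=
  aeval (fun n : Fin 4 => if n = 2 then 0 else X n)

variable {k}

lemma aux_fin2_eq_zero {x : Fin 2 → k} (h0 : x 0 = 0) (h1 : x 1 = 0) : x = 0 := by
  funext i; fin_cases i <;> simpa

lemma aux_rep_ne (A : P1 k) : A.rep 0 ≠ 0 ∨ A.rep 1 ≠ 0 := by
  by_contra hc
  push_neg at hc
  exact A.rep_nonzero (aux_fin2_eq_zero hc.1 hc.2)

lemma aux_det_ne {A B : P1 k} (h : A ≠ B) :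
    A.rep 1 * B.rep 0 - A.rep 0 * B.rep 1 ≠ 0 := by
  intro hd
  apply h
  rw [sub_eq_zero] at hd
  rw [← A.mk_rep, ← B.mk_rep, Projectivization.mk_eq_mk_iff']
  rcases em (B.rep 0 = 0) with hb0 | hb0
  · have hb1 : B.rep 1 ≠ 0 := by
      rcases aux_rep_ne B with h' | h' 
      · exact absurd hb0 h'
      · exact h'
    have ha0 : A.rep 0 = 0 := by
      have := hd
      rw [hb0, mul_zero] at this
      rcases mul_eq_zero.1 this.symm with h' | h'
      · exact h'
      · exact absurd h' hb1
    refine ⟨A.rep 1 / B.rep 1, funext fun i => ?_⟩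
    fin_cases i
    · simp [hb0, ha0]
    · simp [div_mul_cancel₀, hb1]
  · refine ⟨A.rep 0 / B.rep 0, funext fun i => ?_⟩
    fin_cases i
    · simp [div_mul_cancel₀, hb0]
    · have : A.rep 0 * B.rep 1 = A.rep 1 * B.rep 0 := by linear_combination -hd
      simp only [Pi.smul_apply, smul_eq_mul]
      field_simp
      simp only [Fin.mk_one]
      linear_combination this

lemma aux_rep0_ne {B : P1 k} (h : B ≠ pt01 k) : B.rep 0 ≠ 0 := by
  intro h0
  apply h
  rw [← B.mk_rep]
  show Projectivization.mk k B.rep _ = _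
  rw [pt01, Projectivization.mk_eq_mk_iff']
  refine ⟨B.rep 1, funext fun i => ?_⟩
  fin_cases i <;> simp [h0]

lemma aux_lin_comb {A B : P1 k} (h : A ≠ B) :
    (∃ c₁ c₂ : k, C c₁ * lX k A + C c₂ * lX k B = X 0) ∧
    (∃ d₁ d₂ : k, C d₁ * lX k A + C d₂ * lX k B = X 1) := by
  set a0 := A.rep 0; set a1 := A.rep 1; set b0 := B.rep 0; set b1 := B.rep 1
  have hD : a1 * b0 - a0 * b1 ≠ 0 := aux_det_ne h
  constructor
  · refine ⟨b0 / (a1 * b0 - a0 * b1), -a0 / (a1 * b0 - a0 * b1), ?_⟩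
    have e1 : b0 / (a1 * b0 - a0 * b1) * a1 + (-a0 / (a1 * b0 - a0 * b1)) * b1 = 1 := by
      rw [div_mul_eq_mul_div, div_mul_eq_mul_div, ← add_div, div_eq_iff hD]
      ring
    have e2 : b0 / (a1 * b0 - a0 * b1) * a0 + (-a0 / (a1 * b0 - a0 * b1)) * b0 = 0 := by
      field_simp
      ring
    have key : C (b0 / (a1 * b0 - a0 * b1)) * lX k A + C (-a0 / (a1 * b0 - a0 * b1)) * lX k B
        = C (b0 / (a1 * b0 - a0 * b1) * a1 + (-a0 / (a1 * b0 - a0 * b1)) * b1) * X 0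
          - C (b0 / (a1 * b0 - a0 * b1) * a0 + (-a0 / (a1 * b0 - a0 * b1)) * b0) * X 1 := by
      simp only [lX, map_add, map_mul, map_neg]
      ring
    rw [key, e1, e2, map_one, map_zero, one_mul, zero_mul, sub_zero]
  · refine ⟨b1 / (a1 * b0 - a0 * b1), -a1 / (a1 * b0 - a0 * b1), ?_⟩
    have e1 : b1 / (a1 * b0 - a0 * b1) * a1 + (-a1 / (a1 * b0 - a0 * b1)) * b1 = 0 := by
      field_simp
      ring
    have e2 : b1 / (a1 * b0 - a0 * b1) * a0 + (-a1 / (a1 * b0 - a0 * b1)) * b0 = -1 := by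
      rw [div_mul_eq_mul_div, div_mul_eq_mul_div, ← add_div, div_eq_iff hD]
      ring
    have key : C (b1 / (a1 * b0 - a0 * b1)) * lX k A + C (-a1 / (a1 * b0 - a0 * b1)) * lX k B
        = C (b1 / (a1 * b0 - a0 * b1) * a1 + (-a1 / (a1 * b0 - a0 * b1)) * b1) * X 0
          - C (b1 / (a1 * b0 - a0 * b1) * a0 + (-a1 / (a1 * b0 - a0 * b1)) * b0) * X 1 := by
      simp only [lX, map_add, map_mul, map_neg]
      ring
    rw [key, e1, e2, map_zero, zero_mul, zero_sub, map_neg, map_one, neg_mul, one_mul, neg_neg]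

lemma aux_lX_not_dvd {A B : P1 k} (h : A ≠ B) : ¬ (lX k A ∣ lX k B) := by
  rintro ⟨g, hg⟩
  obtain ⟨⟨c₁, c₂, hc⟩, ⟨d₁, d₂, hd⟩⟩ := aux_lin_comb h
  have hX0 : lX k A ∣ X 0 := ⟨C c₁ + C c₂ * g, by rw [← hc, hg]; ring⟩
  have hX1 : lX k A ∣ X 1 := ⟨C d₁ + C d₂ * g, by rw [← hd, hg]; ring⟩
  set v : Fin 4 → k := fun n => if n = 0 then A.rep 0 else if n = 1 then A.rep 1 else 0 with hv
  have hevl : eval v (lX k A) = 0 := by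
    simp [lX, hv]
    ring
  obtain ⟨w0, hw0⟩ := hX0
  obtain ⟨w1, hw1⟩ := hX1
  have h0 : A.rep 0 = 0 := by
    have := congrArg (eval v) hw0
    rw [map_mul, hevl, zero_mul] at this
    simpa [hv] using this
  have h1 : A.rep 1 = 0 := by
    have := congrArg (eval v) hw1
    rw [map_mul, hevl, zero_mul] at this
    simpa [hv] using this
  rcases aux_rep_ne A with h' | h' <;> [exact h' h0; exact h' h1]

lemma aux_sub_aeval_mem (s : Set (MvPolynomial (Fin 4) k)) (g : Fin 4 → MvPolynomial (Fin 4) k)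
    (hg : ∀ n, X n - g n ∈ Ideal.span s) (f : MvPolynomial (Fin 4) k) :
    f - aeval g f ∈ Ideal.span s := by
  induction f using MvPolynomial.induction_on with
  | C a => simp [aeval_C]
  | add p q hp hq =>
      have : p + q - aeval g (p + q) = (p - aeval g p) + (q - aeval g q) := by
        rw [map_add]; ring
      rw [this]
      exact Ideal.add_mem _ hp hq
  | mul_X p n hp =>
      have : p * X n - aeval g (p * X n)
          = (p - aeval g p) * X n + aeval g p * (X n - g n) := by
        rw [map_mul, aeval_X]; ring
      rw [this]
      exact Ideal.add_mem _ (Ideal.mul_mem_right _ _ hp) (Ideal.mul_mem_left _ _ (hg n))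

lemma aux_lX_ne_zero (A : P1 k) : lX k A ≠ 0 := by
  intro h0
  have e1 : eval (fun n : Fin 4 => if n = 0 then 1 else 0) (lX k A) = A.rep 1 := by
    simp [lX]
  have e2 : eval (fun n : Fin 4 => if n = 1 then 1 else 0) (lX k A) = -A.rep 0 := by
    simp [lX]
  rw [h0, map_zero] at e1 e2
  rcases aux_rep_ne A with h' | h'
  · exact h' (by linear_combination e2)
  · exact h' e1.symm

lemma aux_lX_prime (A : P1 k) : Prime (lX k A) := by
  rw [← Ideal.span_singleton_prime (aux_lX_ne_zero A)]
  have halg : algebraMap k (MvPolynomial (Fin 4) k) = C := rfl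
  rcases aux_rep_ne A with ha | ha
  · -- A.rep 0 ≠ 0 : substitute X 1 ↦ (a1/a0) X 0
    have hker : Ideal.span {lX k A} = RingHom.ker
        (aeval (fun n : Fin 4 => if n = 1 then C (A.rep 1 / A.rep 0) * X 0 else X n)
          : MvPolynomial (Fin 4) k →ₐ[k] MvPolynomial (Fin 4) k).toRingHom := by
      apply le_antisymm
      · rw [Ideal.span_le, Set.singleton_subset_iff, SetLike.mem_coe, RingHom.mem_ker]
        show (aeval (fun n : Fin 4 => if n = 1 then C (A.rep 1 / A.rep 0) * X 0 else X n))
          (lX k A) = 0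
        have h1 : (C (A.rep 0) : MvPolynomial (Fin 4) k) * C (A.rep 1 / A.rep 0)
            = C (A.rep 1) := by
          rw [← C_mul, mul_div_cancel₀ _ ha]
        simp only [lX, map_sub, map_mul, aeval_X, aeval_C, halg,
          if_pos rfl, if_neg (by decide : (0 : Fin 4) ≠ 1), if_true]
        linear_combination (-(X 0) : MvPolynomial (Fin 4) k) * h1
      · intro f hf
        have hf' : (aeval (fun n : Fin 4 => if n = 1 then C (A.rep 1 / A.rep 0) * X 0 else X n))
            f = 0 := hf
        have hx : ∀ n : Fin 4, X n -
            (fun n : Fin 4 => if n = 1 then C (A.rep 1 / A.rep 0) * X 0 else X n) n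
            ∈ Ideal.span {lX k A} := by
          intro n
          by_cases hn : n = 1
          · subst hn
            simp only [if_pos rfl, if_true]
            refine Ideal.mem_span_singleton'.2 ⟨-C (A.rep 0)⁻¹, ?_⟩
            have h1 : (C (A.rep 0)⁻¹ : MvPolynomial (Fin 4) k) * C (A.rep 0) = 1 := by
              rw [← C_mul, inv_mul_cancel₀ ha, C_1]
            have h2 : (C (A.rep 1 / A.rep 0) : MvPolynomial (Fin 4) k)
                = C (A.rep 0)⁻¹ * C (A.rep 1) := by
              rw [← C_mul, div_eq_inv_mul]
            rw [lX]
            linear_combination (X 1 : MvPolynomial (Fin 4) k) * h1 + (X 0) * h2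
          · simp [hn]
        have := aux_sub_aeval_mem {lX k A} _ hx f
        rwa [hf', sub_zero] at this
    rw [hker]
    exact RingHom.ker_isPrime _
  · -- A.rep 1 ≠ 0 : substitute X 0 ↦ (a0/a1) X 1
    have hker : Ideal.span {lX k A} = RingHom.ker
        (aeval (fun n : Fin 4 => if n = 0 then C (A.rep 0 / A.rep 1) * X 1 else X n)
          : MvPolynomial (Fin 4) k →ₐ[k] MvPolynomial (Fin 4) k).toRingHom := by
      apply le_antisymm
      · rw [Ideal.span_le, Set.singleton_subset_iff, SetLike.mem_coe, RingHom.mem_ker]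
        show (aeval (fun n : Fin 4 => if n = 0 then C (A.rep 0 / A.rep 1) * X 1 else X n))
          (lX k A) = 0
        have h1 : (C (A.rep 1) : MvPolynomial (Fin 4) k) * C (A.rep 0 / A.rep 1)
            = C (A.rep 0) := by
          rw [← C_mul, mul_div_cancel₀ _ ha]
        simp only [lX, map_sub, map_mul, aeval_X, aeval_C, halg,
          if_pos rfl, if_neg (by decide : (1 : Fin 4) ≠ 0), if_true]
        linear_combination (X 1 : MvPolynomial (Fin 4) k) * h1
      · intro f hf
        have hf' : (aeval (fun n : Fin 4 => if n = 0 then C (A.rep 0 / A.rep 1) * X 1 else X n))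
            f = 0 := hf
        have hx : ∀ n : Fin 4, X n -
            (fun n : Fin 4 => if n = 0 then C (A.rep 0 / A.rep 1) * X 1 else X n) n
            ∈ Ideal.span {lX k A} := by
          intro n
          by_cases hn : n = 0
          · subst hn
            simp only [if_pos rfl, if_true]
            refine Ideal.mem_span_singleton'.2 ⟨C (A.rep 1)⁻¹, ?_⟩
            have h1 : (C (A.rep 1)⁻¹ : MvPolynomial (Fin 4) k) * C (A.rep 1) = 1 := by
              rw [← C_mul, inv_mul_cancel₀ ha, C_1]
            have h2 : (C (A.rep 0 / A.rep 1) : MvPolynomial (Fin 4) k)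
                = C (A.rep 1)⁻¹ * C (A.rep 0) := by
              rw [← C_mul, div_eq_inv_mul]
            rw [lX]
            linear_combination (X 0 : MvPolynomial (Fin 4) k) * h1 + (X 1) * h2
          · simp [hn]
        have := aux_sub_aeval_mem {lX k A} _ hx f
        rwa [hf', sub_zero] at this
    rw [hker]
    exact RingHom.ker_isPrime _

lemma aux_sig_monomial (m : Fin 4 →₀ ℕ) (c : k) :
    aux_sig k (monomial m c) = if m 2 = 0 then monomial m c else 0 := by
  rw [aux_sig, aeval_monomial]
  by_cases h2 : m 2 = 0
  · rw [if_pos h2]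
    rw [monomial_eq]
    have : (algebraMap k (MvPolynomial (Fin 4) k)) c = C c := rfl
    rw [this]
    congr 1
    apply Finsupp.prod_congr
    intro n hn
    have hn2 : n ≠ 2 := by
      intro h; subst h; exact (Finsupp.mem_support_iff.1 hn) h2
    rw [if_neg hn2]
  · rw [if_neg h2]
    have h2s : (2 : Fin 4) ∈ m.support := Finsupp.mem_support_iff.2 h2
    rw [Finsupp.prod]
    rw [Finset.prod_eq_zero h2s]
    · ring
    · rw [if_pos rfl, zero_pow h2]

lemma aux_sub_sig_mem (F : MvPolynomial (Fin 4) k) :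
    F - aux_sig k F ∈ Ideal.span {(X 2 : MvPolynomial (Fin 4) k)} := by
  apply aux_sub_aeval_mem
  intro n
  by_cases hn : n = 2
  · subst hn
    have : (if (2 : Fin 4) = 2 then (0 : MvPolynomial (Fin 4) k) else X 2) = 0 := if_pos rfl
    rw [this, sub_zero]
    exact Ideal.subset_span rfl
  · simp [hn]

lemma aux_sig_sum (F : MvPolynomial (Fin 4) k) :
    aux_sig k F = ∑ m ∈ F.support.filter (fun m => m 2 = 0), monomial m (coeff m F) := by
  conv_lhs => rw [F.as_sum]
  rw [map_sum, Finset.sum_filter]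
  exact Finset.sum_congr rfl fun m _ => aux_sig_monomial m (coeff m F)

lemma aux_sig_eq_self {F : MvPolynomial (Fin 4) k} (h : ∀ m ∈ F.support, m 2 = 0) :
    aux_sig k F = F := by
  rw [aux_sig_sum, Finset.filter_true_of_mem h]
  exact (F.as_sum).symm

lemma aux_sig_lX (A : P1 k) : aux_sig k (lX k A) = lX k A := by
  simp [aux_sig, lX]

lemma aux_sig_lY (B : P1 k) : aux_sig k (lY k B) = -(C (B.rep 0) * X 3) := by
  simp [aux_sig, lY]

lemma aux_sig_X3 : aux_sig k (X 3) = X 3 := by simp [aux_sig]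

-- membership of monomials in powers of Mx

lemma aux_monomial_mem_Mx (d : ℕ) (m : Fin 4 →₀ ℕ) (c : k) (hd : d ≤ m 0 + m 1) :
    monomial m c ∈ Mx k ^ d := by
  induction d generalizing m with
  | zero => simp
  | succ d ih =>
      rcases Nat.lt_or_ge (m 0) 1 with h0 | h0
      · -- m 0 = 0, so m 1 ≥ d + 1
        have h1 : 1 ≤ m 1 := by omega
        have hle : Finsupp.single 1 1 ≤ m := Finsupp.single_le_iff.2 h1
        have key : monomial m c = X 1 * monomial (m - Finsupp.single 1 1) c := by
          rw [X, monomial_mul, one_mul, add_tsub_cancel_of_le hle]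
        rw [key, pow_succ']
        refine Ideal.mul_mem_mul (Ideal.subset_span (by simp)) (ih _ ?_)
        rw [Finsupp.tsub_apply, Finsupp.tsub_apply,
          Finsupp.single_eq_of_ne' (by decide : (1 : Fin 4) ≠ 0), Finsupp.single_eq_same]
        omega
      · have hle : Finsupp.single 0 1 ≤ m := Finsupp.single_le_iff.2 h0
        have key : monomial m c = X 0 * monomial (m - Finsupp.single 0 1) c := by
          rw [X, monomial_mul, one_mul, add_tsub_cancel_of_le hle]
        rw [key, pow_succ']
        refine Ideal.mul_mem_mul (Ideal.subset_span (by simp)) (ih _ ?_)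
        rw [Finsupp.tsub_apply, Finsupp.tsub_apply,
          Finsupp.single_eq_same, Finsupp.single_eq_of_ne' (by decide : (0 : Fin 4) ≠ 1)]
        omega

lemma aux_homog_mem_Mx (d : ℕ) (F : MvPolynomial (Fin 4) k)
    (h : ∀ m ∈ F.support, d ≤ m 0 + m 1) : F ∈ Mx k ^ d := by
  rw [F.as_sum]
  exact Submodule.sum_mem _ fun m hm => aux_monomial_mem_Mx d m _ (h m hm)

-- coefficients of a filtered monomial sum

lemma aux_coeff_filter (f : MvPolynomial (Fin 4) k) (p : (Fin 4 →₀ ℕ) → Prop) [DecidablePred p]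
    (q : Fin 4 →₀ ℕ) :
    coeff q (∑ m ∈ f.support.filter p, monomial m (coeff m f))
      = if p q then coeff q f else 0 := by
  rw [coeff_sum]
  simp only [coeff_monomial]
  rw [Finset.sum_ite_eq' (f.support.filter p) q (fun m => coeff m f)]
  by_cases hq : p q
  · by_cases hs : q ∈ f.support
    · rw [if_pos (Finset.mem_filter.2 ⟨hs, hq⟩), if_pos hq]
    · rw [if_neg (fun hmem => hs (Finset.mem_filter.1 hmem).1), if_pos hq]
      exact (MvPolynomial.notMem_support_iff.1 hs).symm ▸ rfl
  · rw [if_neg (fun hmem => hq (Finset.mem_filter.1 hmem).2), if_neg hq]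

-- extracting the x-homogeneous component of a cofactor

lemma aux_factor_homog (g h : MvPolynomial (Fin 4) k) (t i : ℕ)
    (hg : ∀ m ∈ g.support, m 0 + m 1 = t)
    (hf : ∀ m ∈ (g * h).support, m 0 + m 1 = i) :
    ∃ h' : MvPolynomial (Fin 4) k, g * h' = g * h ∧
      ∀ m ∈ h'.support, m 0 + m 1 + t = i := by
  refine ⟨∑ m ∈ h.support.filter (fun m => m 0 + m 1 + t = i), monomial m (coeff m h), ?_, ?_⟩
  · apply MvPolynomial.ext
    intro q
    rw [coeff_mul, coeff_mul]
    by_cases hq : q 0 + q 1 = i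
    · apply Finset.sum_congr rfl
      intro x hx
      rw [Finset.HasAntidiagonal.mem_antidiagonal] at hx
      by_cases hg0 : coeff x.1 g = 0
      · rw [hg0, zero_mul, zero_mul]
      · have hx1 : x.1 0 + x.1 1 = t := hg x.1 (MvPolynomial.mem_support_iff.2 hg0) 
        have hq0 : q 0 = x.1 0 + x.2 0 := by rw [← hx]; rfl
        have hq1 : q 1 = x.1 1 + x.2 1 := by rw [← hx]; rfl
        have hx2 : x.2 0 + x.2 1 + t = i := by omega
        rw [aux_coeff_filter, if_pos hx2]
    · have hzero : coeff q (g * h) = 0 := by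
        by_contra hne
        exact hq (hf q (MvPolynomial.mem_support_iff.2 hne))
      rw [coeff_mul] at hzero
      rw [hzero]
      apply Finset.sum_eq_zero
      intro x hx
      rw [Finset.HasAntidiagonal.mem_antidiagonal] at hx
      rw [aux_coeff_filter]
      by_cases hg0 : coeff x.1 g = 0
      · rw [hg0, zero_mul]
      · have hx1 : x.1 0 + x.1 1 = t := hg x.1 (MvPolynomial.mem_support_iff.2 hg0)
        have hq0 : q 0 = x.1 0 + x.2 0 := by rw [← hx]; rfl
        have hq1 : q 1 = x.1 1 + x.2 1 := by rw [← hx]; rfl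
        rw [if_neg (by omega), mul_zero]
  · intro m hm
    have := MvPolynomial.mem_support_iff.1 hm
    rw [aux_coeff_filter] at this
    by_cases hc : m 0 + m 1 + t = i
    · exact hc
    · rw [if_neg hc] at this; exact absurd rfl this

lemma aux_sig_C (c : k) : aux_sig k (C c) = C c := by simp [aux_sig]

lemma aux_sig_supp (p : MvPolynomial (Fin 4) k) : ∀ m ∈ (aux_sig k p).support, m 2 = 0 := by
  intro m hm
  rw [aux_sig_sum] at hm
  obtain ⟨m', hm', hmm⟩ := Finset.mem_biUnion.1 (MvPolynomial.support_sum hm)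
  have : m = m' := Finset.mem_singleton.1 (MvPolynomial.support_monomial_subset hmm)
  subst this
  exact (Finset.mem_filter.1 hm').2

lemma aux_sig_idem (p : MvPolynomial (Fin 4) k) : aux_sig k (aux_sig k p) = aux_sig k p :=
  aux_sig_eq_self (aux_sig_supp p)

lemma aux_sig_prod_lX (V : Finset (P1 k)) :
    aux_sig k (∏ A ∈ V, lX k A) = ∏ A ∈ V, lX k A := by
  rw [map_prod]
  exact Finset.prod_congr rfl fun A _ => aux_sig_lX A

lemma aux_sig_prod_lY (E : Finset (P1 k × P1 k)) :
    aux_sig k (∏ P ∈ E, lY k P.2)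
      = C (∏ P ∈ E, (-(P.2.rep 0))) * (X 3 : MvPolynomial (Fin 4) k) ^ E.card := by
  rw [map_prod]
  have h1 : ∀ P ∈ E, aux_sig k (lY k P.2) = C (-(P.2.rep 0)) * X 3 := by
    intro P _
    rw [aux_sig_lY, map_neg, neg_mul]
  rw [Finset.prod_congr rfl h1, Finset.prod_mul_distrib, ← map_prod, Finset.prod_const]

lemma aux_lX_supp (A : P1 k) :
    ∀ m ∈ (lX k A).support, m 0 + m 1 = 1 ∧ m 2 = 0 ∧ m 3 = 0 := by
  intro m hm
  have h1 : (C (A.rep 1) * X 0 : MvPolynomial (Fin 4) k) = monomial (Finsupp.single 0 1) (A.rep 1) := by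
    rw [X, C_mul_monomial, mul_one]
  have h2 : (C (A.rep 0) * X 1 : MvPolynomial (Fin 4) k) = monomial (Finsupp.single 1 1) (A.rep 0) := by
    rw [X, C_mul_monomial, mul_one]
  rw [lX] at hm
  have := MvPolynomial.support_sub _ _ _ hm
  rcases Finset.mem_union.1 this with hmem | hmem
  · rw [h1] at hmem
    have := Finset.mem_singleton.1 (MvPolynomial.support_monomial_subset hmem)
    subst this
    refine ⟨?_, ?_, ?_⟩ <;> simp [Finsupp.single_apply]
  · rw [h2] at hmem
    have := Finset.mem_singleton.1 (MvPolynomial.support_monomial_subset hmem)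
    subst this
    refine ⟨?_, ?_, ?_⟩ <;> simp [Finsupp.single_apply]

lemma aux_prod_lX_supp (V : Finset (P1 k)) :
    ∀ m ∈ (∏ A ∈ V, lX k A).support, m 0 + m 1 = V.card ∧ m 2 = 0 ∧ m 3 = 0 := by
  induction V using Finset.induction_on with
  | empty =>
      intro m hm
      rw [Finset.prod_empty] at hm
      have h1 : (1 : MvPolynomial (Fin 4) k) = monomial 0 1 := by
        rw [monomial_zero']; rw [C_1]
      rw [h1] at hm
      have := Finset.mem_singleton.1 (MvPolynomial.support_monomial_subset hm)
      subst this
      simp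
  | @insert a s ha ih =>
      intro m hm
      rw [Finset.prod_insert ha] at hm
      obtain ⟨p, hp, q, hq, rfl⟩ := Finset.mem_add.1 (MvPolynomial.support_mul _ _ hm)
      obtain ⟨hp1, hp2, hp3⟩ := aux_lX_supp a p hp
      obtain ⟨hq1, hq2, hq3⟩ := ih q hq
      rw [Finset.card_insert_of_notMem ha]
      refine ⟨?_, ?_, ?_⟩ <;> simp only [Finsupp.add_apply] <;> omega

lemma aux_prod_dvd (T : Finset (P1 k)) (f : MvPolynomial (Fin 4) k)
    (hdvd : ∀ A ∈ T, lX k A ∣ f) : (∏ A ∈ T, lX k A) ∣ f := by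
  induction T using Finset.induction_on with
  | empty => simpa using one_dvd f
  | @insert a s ha ih =>
      obtain ⟨g, hg⟩ := ih (fun A hA => hdvd A (Finset.mem_insert_of_mem hA))
      have hla : lX k a ∣ (∏ A ∈ s, lX k A) * g :=
        hg ▸ hdvd a (Finset.mem_insert_self a s)
      rcases (aux_lX_prime a).dvd_mul.1 hla with hc | hc
      · exfalso
        obtain ⟨A', hA', hdvd'⟩ := (Prime.dvd_finset_prod_iff (aux_lX_prime a) _).1 hc
        exact aux_lX_not_dvd (fun he => ha (by rw [he]; exact hA')) hdvd'
      · obtain ⟨g', rfl⟩ := hc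
        rw [Finset.prod_insert ha, hg]
        exact ⟨g', by ring⟩

lemma aux_interp (V : Finset (P1 k)) :
    V.Nonempty → Mx k ^ (V.card - 1) ≤
      Ideal.span ((fun A => ∏ B ∈ V.erase A, lX k B) '' (V : Set (P1 k))) := by
  induction V using Finset.induction_on with
  | empty => intro hne; simp at hne
  | @insert a s ha ih =>
      intro _
      rcases s.eq_empty_or_nonempty with rfl | hs
      · have hc : (insert a (∅ : Finset (P1 k))).card - 1 = 0 := by simp
        rw [hc, pow_zero, Ideal.one_eq_top]
        have h1 : (1 : MvPolynomial (Fin 4) k)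
            ∈ ((fun A => ∏ B ∈ (insert a (∅ : Finset (P1 k))).erase A, lX k B) ''
              ((insert a (∅ : Finset (P1 k)) : Finset (P1 k)) : Set (P1 k))) := by
          refine ⟨a, by simp, ?_⟩
          simp
        have htop := (Ideal.eq_top_iff_one _).2 (Ideal.subset_span h1)
        rw [htop]
      · have hcard : (insert a s).card - 1 = s.card := by
          rw [Finset.card_insert_of_notMem ha]
          omega
        rw [hcard]
        have hpow : Mx k ^ s.card = Mx k ^ (s.card - 1) * Mx k := by
          rw [← pow_succ]
          congr 1
          have := Finset.card_pos.2 hs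
          omega
        rw [hpow]
        refine le_trans (Ideal.mul_mono_left (ih hs)) ?_
        rw [Mx, Ideal.span_mul_span', Ideal.span_le]
        rintro x ⟨y, ⟨A, hA, rfl⟩, z, hz, rfl⟩
        simp only [Finset.mem_coe] at hA
        have hAa : A ≠ a := fun he => ha (he ▸ hA)
        have hprod1 : lX k A * ∏ B ∈ s.erase A, lX k B
            ∈ Ideal.span ((fun A' => ∏ B ∈ (insert a s).erase A', lX k B) ''
              ((insert a s : Finset (P1 k)) : Set (P1 k))) := by
          apply Ideal.subset_span
          refine ⟨a, by simp, ?_⟩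
          show (∏ B ∈ (insert a s).erase a, lX k B) = _
          rw [Finset.erase_insert ha, ← Finset.mul_prod_erase s _ hA]
        have hprod2 : lX k a * ∏ B ∈ s.erase A, lX k B
            ∈ Ideal.span ((fun A' => ∏ B ∈ (insert a s).erase A', lX k B) ''
              ((insert a s : Finset (P1 k)) : Set (P1 k))) := by
          apply Ideal.subset_span
          refine ⟨A, by simp [hA], ?_⟩
          show (∏ B ∈ (insert a s).erase A, lX k B) = _
          rw [Finset.erase_insert_of_ne hAa.symm,
            Finset.prod_insert (fun hmem => ha (Finset.mem_of_mem_erase hmem))]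
        obtain ⟨⟨c₁, c₂, hc⟩, ⟨d₁, d₂, hd⟩⟩ := aux_lin_comb hAa
        rcases hz with rfl | hz
        · show (∏ B ∈ s.erase A, lX k B) * X 0 ∈ _
          have hkey : (∏ B ∈ s.erase A, lX k B) * X 0
              = C c₁ * (lX k A * ∏ B ∈ s.erase A, lX k B)
                + C c₂ * (lX k a * ∏ B ∈ s.erase A, lX k B) := by
            rw [← hc]; ring
          rw [hkey]
          exact Ideal.add_mem _ (Ideal.mul_mem_left _ _ hprod1) (Ideal.mul_mem_left _ _ hprod2)
        · rw [Set.mem_singleton_iff] at hz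
          subst hz
          show (∏ B ∈ s.erase A, lX k B) * X 1 ∈ _
          have hkey : (∏ B ∈ s.erase A, lX k B) * X 1
              = C d₁ * (lX k A * ∏ B ∈ s.erase A, lX k B)
                + C d₂ * (lX k a * ∏ B ∈ s.erase A, lX k B) := by
            rw [← hd]; ring
          rw [hkey]
          exact Ideal.add_mem _ (Ideal.mul_mem_left _ _ hprod1) (Ideal.mul_mem_left _ _ hprod2)

lemma aux_bicomp_supp {i j : ℕ} {F : MvPolynomial (Fin 4) k} (hF : F ∈ bicomp k i j) :
    ∀ m ∈ F.support, m 0 + m 1 = i ∧ m 2 + m 3 = j := by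
  induction hF using Submodule.span_induction with
  | mem f hf =>
      obtain ⟨m, h1, h2, rfl⟩ := hf
      intro m' hm'
      have := Finset.mem_singleton.1 (MvPolynomial.support_monomial_subset hm')
      subst this
      exact ⟨h1, h2⟩
  | zero => intro m hm; simp at hm
  | add f g _ _ hf hg =>
      intro m hm
      rcases Finset.mem_union.1 (MvPolynomial.support_add hm) with hmem | hmem
      · exact hf m hmem
      · exact hg m hmem
  | smul c f _ hf =>
      intro m hm
      exact hf m (MvPolynomial.support_smul hm)

-- the second substitution X2 ↦ 0, X3 ↦ 1
lemma aux_phi_monomial (m : Fin 4 →₀ ℕ) (c : k) :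
    aeval (fun n : Fin 4 => if n = 2 then 0 else if n = 3 then 1 else X n) (monomial m c)
      = if m 2 = 0 then monomial (m.erase 3) c else 0 := by
  rw [aeval_monomial]
  by_cases h2 : m 2 = 0
  · rw [if_pos h2]
    have halg : (algebraMap k (MvPolynomial (Fin 4) k)) c = C c := rfl
    rw [halg, monomial_eq]
    congr 1
    rw [Finsupp.prod, Finsupp.prod, Finsupp.support_erase]
    have hstep1 : ∏ n ∈ m.support,
        (fun n : Fin 4 => if n = 2 then 0 else if n = 3 then (1 : MvPolynomial (Fin 4) k)
          else X n) n ^ m n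
        = ∏ n ∈ m.support.erase 3,
        (fun n : Fin 4 => if n = 2 then 0 else if n = 3 then (1 : MvPolynomial (Fin 4) k)
          else X n) n ^ m n := by
      refine (Finset.prod_erase _ ?_).symm
      simp
    rw [hstep1]
    apply Finset.prod_congr rfl
    intro n hn
    have hn3 : n ≠ 3 := Finset.ne_of_mem_erase hn
    have hn2 : n ≠ 2 := by
      intro h; subst h
      exact (Finsupp.mem_support_iff.1 (Finset.mem_of_mem_erase hn)) h2
    simp only [if_neg hn2, if_neg hn3]
    rw [Finsupp.erase_ne hn3]
  · rw [if_neg h2]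
    have h2s : (2 : Fin 4) ∈ m.support := Finsupp.mem_support_iff.2 h2
    rw [Finsupp.prod, Finset.prod_eq_zero h2s]
    · ring
    · rw [if_pos rfl, zero_pow h2]

lemma aux_phi_sum (F : MvPolynomial (Fin 4) k) :
    aeval (fun n : Fin 4 => if n = 2 then 0 else if n = 3 then 1 else X n) F
      = ∑ m ∈ F.support.filter (fun m => m 2 = 0), monomial (m.erase 3) (coeff m F) := by
  conv_lhs => rw [F.as_sum]
  rw [map_sum, Finset.sum_filter]
  exact Finset.sum_congr rfl fun m _ => aux_phi_monomial m (coeff m F)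


/-- suppose no point of `X` has second coordinate `[0:1]`, let
`i ≥ |π₁(X)| − 1`, and let `F` be bihomogeneous of degree `(i,j)`. If `F ∈ ⟨y₀, L_A⟩`
for every `A ∈ π₁(X)` with `α_A ≥ j+1`, then `F ∈ ⟨I_X, y₀⟩`. -/
theorem stmt17 [CharZero k] (Xs : Finset (P1 k × P1 k))
    (h01 : ∀ P ∈ Xs, P.2 ≠ pt01 k) (i j : ℕ) (hi : (pi1 k Xs).card ≤ i + 1)
    (F : MvPolynomial (Fin 4) k) (hF : F ∈ bicomp k i j)
    (h : ∀ A ∈ pi1 k Xs, j + 1 ≤ alphaA k Xs A → F ∈ Ideal.span {X 2, lX k A}) :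
    F ∈ IX k Xs ⊔ Ideal.span {X 2} := by
  have hsupp := aux_bicomp_supp hF
  set T : Finset (P1 k) := (pi1 k Xs).filter (fun A => j + 1 ≤ alphaA k Xs A) with hT
  set U : Finset (P1 k) := (pi1 k Xs).filter (fun A => ¬ (j + 1 ≤ alphaA k Xs A)) with hU
  set f : MvPolynomial (Fin 4) k :=
    ∑ m ∈ F.support.filter (fun m => m 2 = 0), monomial (m.erase 3) (coeff m F) with hf
  -- the y₀ := 0 specialization of F is X3^j * f
  have hF0 : aux_sig k F = X 3 ^ j * f := by
    rw [aux_sig_sum, hf, Finset.mul_sum]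
    apply Finset.sum_congr rfl
    intro m hm
    obtain ⟨hm1, hm2⟩ := Finset.mem_filter.1 hm
    have h3 : m 3 = j := by
      have := (hsupp m hm1).2
      omega
    rw [X_pow_eq_monomial, monomial_mul, one_mul]
    have hm' : Finsupp.single 3 j + Finsupp.erase 3 m = m := by
      rw [← h3]
      exact Finsupp.single_add_erase 3 m
    rw [hm']
  -- support facts for f
  have hfsupp : ∀ m ∈ f.support, (m 0 + m 1 = i) ∧ m 2 = 0 ∧ m 3 = 0 := by
    intro m hm
    rw [hf] at hm
    obtain ⟨m', hm', hmm⟩ := Finset.mem_biUnion.1 (MvPolynomial.support_sum hm)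
    have := Finset.mem_singleton.1 (MvPolynomial.support_monomial_subset hmm)
    subst this
    obtain ⟨hm1, hm2⟩ := Finset.mem_filter.1 hm'
    refine ⟨?_, ?_, ?_⟩
    · rw [Finsupp.erase_ne (by decide : (0 : Fin 4) ≠ 3),
        Finsupp.erase_ne (by decide : (1 : Fin 4) ≠ 3)]
      exact (hsupp m' hm1).1
    · rw [Finsupp.erase_ne (by decide : (2 : Fin 4) ≠ 3)]
      exact hm2
    · exact Finsupp.erase_same
  have hsigf : aux_sig k f = f := aux_sig_eq_self (fun m hm => (hfsupp m hm).2.1)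
  -- hypothesis transfer : lX A divides f for A ∈ T
  have hdvdT : ∀ A ∈ T, lX k A ∣ f := by
    intro A hAT
    obtain ⟨hA1, hA2⟩ := Finset.mem_filter.1 hAT
    obtain ⟨u, v, huv⟩ := Ideal.mem_span_pair.1 (h A hA1 hA2)
    have hc : aeval (fun n : Fin 4 => if n = 2 then (0 : MvPolynomial (Fin 4) k)
          else if n = 3 then 1 else X n)
        (u * X 2 + v * lX k A)
        = aeval (fun n : Fin 4 => if n = 2 then (0 : MvPolynomial (Fin 4) k)
          else if n = 3 then 1 else X n) F := by
      rw [huv]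
    rw [map_add, map_mul, map_mul, aux_phi_sum F, ← hf] at hc
    have hX2 : aeval (fun n : Fin 4 => if n = 2 then (0 : MvPolynomial (Fin 4) k)
          else if n = 3 then 1 else X n)
        (X 2 : MvPolynomial (Fin 4) k) = 0 := by simp
    have hlXA : aeval (fun n : Fin 4 => if n = 2 then (0 : MvPolynomial (Fin 4) k)
          else if n = 3 then 1 else X n)
        (lX k A) = lX k A := by
      simp [lX]
    rw [hX2, mul_zero, zero_add, hlXA] at hc
    exact Dvd.intro_left _ hc
  obtain ⟨f₁', hf₁'⟩ := aux_prod_dvd T f hdvdT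
  -- f lies in the span of the products of linear forms
  have hfspan : f ∈ Ideal.span
      (((fun A => ∏ B ∈ (pi1 k Xs).erase A, lX k B) '' (U : Set (P1 k)))
        ∪ {∏ A ∈ pi1 k Xs, lX k A}) := by
    rcases Finset.eq_empty_or_nonempty U with hUe | hUne
    · have hTall : T = pi1 k Xs := by
        have := Finset.filter_union_filter_not_eq (fun A => j + 1 ≤ alphaA k Xs A) (pi1 k Xs)
        rw [← hT, ← hU, hUe, Finset.union_empty] at this
        exact this
      rw [hf₁', hTall]
      exact Ideal.mul_mem_right _ _ (Ideal.subset_span (Or.inr rfl))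
    · have hcards : T.card + U.card = (pi1 k Xs).card := by
        rw [hT, hU]
        exact Finset.card_filter_add_card_filter_not _
      have hU1 : 1 ≤ U.card := Finset.card_pos.2 hUne
      obtain ⟨f₁, hfeq, hf₁supp⟩ := aux_factor_homog (∏ A ∈ T, lX k A) f₁' T.card i
        (fun m hm => (aux_prod_lX_supp T m hm).1)
        (by rw [← hf₁']; exact fun m hm => (hfsupp m hm).1)
      have hf1Mx : f₁ ∈ Mx k ^ (U.card - 1) := by
        apply aux_homog_mem_Mx
        intro m hm
        have := hf₁supp m hm
        omega
      have hf1span : f₁ ∈ Ideal.span ((fun A => ∏ B ∈ U.erase A, lX k B) '' (U : Set (P1 k))) :=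
        aux_interp U hUne hf1Mx
      have hff : f = (∏ A ∈ T, lX k A) * f₁ := by rw [hfeq, ← hf₁']
      rw [hff]
      -- multiply the span membership by ∏_T lX
      clear hff hfeq hf₁supp hf1Mx hf₁' hf
      induction hf1span using Submodule.span_induction with
      | mem y hy =>
          obtain ⟨A, hAU, rfl⟩ := hy
          show (∏ A' ∈ T, lX k A') * ∏ B ∈ U.erase A, lX k B ∈ _
          simp only [Finset.mem_coe] at hAU
          have hAnT : A ∉ T := by
            intro hmem
            exact (Finset.mem_filter.1 hAU).2 (Finset.mem_filter.1 hmem).2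
          have hsplit : (pi1 k Xs).erase A = T ∪ U.erase A := by
            have hTU : T ∪ U = pi1 k Xs := by
              rw [hT, hU]
              exact Finset.filter_union_filter_not_eq _ _
            rw [← hTU, Finset.erase_union_distrib, Finset.erase_eq_of_notMem hAnT]
          have hdisj : Disjoint T (U.erase A) := by
            have hdTU : Disjoint T U := by
              rw [hT, hU]
              exact Finset.disjoint_filter_filter_not _ _ _
            exact hdTU.mono_right (Finset.erase_subset _ _)
          have hkey : (∏ A' ∈ T, lX k A') * ∏ B ∈ U.erase A, lX k B
              = ∏ B ∈ (pi1 k Xs).erase A, lX k B := by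
            rw [hsplit, Finset.prod_union hdisj]
          rw [hkey]
          exact Ideal.subset_span (Or.inl ⟨A, hAU, rfl⟩)
      | zero => simp
      | add y z _ _ hy hz =>
          rw [mul_add]
          exact Ideal.add_mem _ hy hz
      | smul c y _ hy =>
          rw [smul_eq_mul, show (∏ A ∈ T, lX k A) * (c * y) = c * ((∏ A ∈ T, lX k A) * y) by ring]
          exact Ideal.mul_mem_left _ _ hy
  -- construct G ∈ I_X with aux_sig G = X3^j * f
  have hmain : ∀ x ∈ Ideal.span
      (((fun A => ∏ B ∈ (pi1 k Xs).erase A, lX k B) '' (U : Set (P1 k)))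
        ∪ {∏ A ∈ pi1 k Xs, lX k A}),
      ∃ G, (∀ P ∈ Xs, G ∈ pointIdeal k P) ∧
        aux_sig k G = X 3 ^ j * aux_sig k x := by
    intro x hx
    induction hx using Submodule.span_induction with
    | mem y hy =>
        rcases hy with ⟨A, hAU, rfl⟩ | hy
        · simp only [Finset.mem_coe] at hAU
          have hα : alphaA k Xs A ≤ j := by
            have := (Finset.mem_filter.1 hAU).2
            omega
          set cA : k := ∏ P ∈ Xs.filter (fun P => P.1 = A), (-(P.2.rep 0)) with hcA
          have hcAne : cA ≠ 0 := by
            rw [hcA]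
            apply Finset.prod_ne_zero_iff.2
            intro P hP
            exact neg_ne_zero.2 (aux_rep0_ne (h01 P (Finset.mem_filter.1 hP).1))
          refine ⟨C cA⁻¹ * ((∏ B ∈ (pi1 k Xs).erase A, lX k B) *
              ((∏ P ∈ Xs.filter (fun P => P.1 = A), lY k P.2) *
                X 3 ^ (j - alphaA k Xs A))), ?_, ?_⟩
          · intro P hP
            by_cases hPA : P.1 = A
            · apply Ideal.mul_mem_left
              apply Ideal.mul_mem_left
              apply Ideal.mul_mem_right
              have hmem : P ∈ Xs.filter (fun P => P.1 = A) := Finset.mem_filter.2 ⟨hP, hPA⟩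
              obtain ⟨w, hw⟩ := Finset.dvd_prod_of_mem (fun P => lY k P.2) hmem
              rw [hw]
              refine Ideal.mul_mem_right _ _ (Ideal.subset_span ?_)
              right
              rfl
            · apply Ideal.mul_mem_left
              apply Ideal.mul_mem_right
              have hmemp : P.1 ∈ pi1 k Xs := by
                rw [pi1]
                exact Finset.mem_image_of_mem _ hP
              have hmem : P.1 ∈ (pi1 k Xs).erase A := Finset.mem_erase.2 ⟨hPA, hmemp⟩
              obtain ⟨w, hw⟩ := Finset.dvd_prod_of_mem (fun B => lX k B) hmem
              rw [hw]
              refine Ideal.mul_mem_right _ _ (Ideal.subset_span ?_)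
              left
              rfl
          · show _ = X 3 ^ j * aux_sig k (∏ B ∈ (pi1 k Xs).erase A, lX k B)
            have hcard : (Xs.filter (fun P => P.1 = A)).card = alphaA k Xs A := rfl
            rw [map_mul, map_mul, map_mul, aux_sig_C, aux_sig_prod_lX, aux_sig_prod_lY,
              map_pow, aux_sig_X3, hcard, ← hcA]
            have hX3 : (X 3 : MvPolynomial (Fin 4) k) ^ (alphaA k Xs A)
                * X 3 ^ (j - alphaA k Xs A) = X 3 ^ j := by
              rw [← pow_add, Nat.add_sub_cancel' hα]
            have hCC : (C cA⁻¹ : MvPolynomial (Fin 4) k) * C cA = 1 := by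
              rw [← C_mul, inv_mul_cancel₀ hcAne, C_1]
            linear_combination
              ((C cA⁻¹ : MvPolynomial (Fin 4) k) * C cA * (∏ B ∈ (pi1 k Xs).erase A, lX k B)) * hX3
              + ((X 3 : MvPolynomial (Fin 4) k) ^ j * (∏ B ∈ (pi1 k Xs).erase A, lX k B)) * hCC
        · rw [Set.mem_singleton_iff] at hy
          subst hy
          refine ⟨X 3 ^ j * ∏ A ∈ pi1 k Xs, lX k A, ?_, ?_⟩
          · intro P hP
            apply Ideal.mul_mem_left
            have hmemp : P.1 ∈ pi1 k Xs := by
              rw [pi1]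
              exact Finset.mem_image_of_mem _ hP
            obtain ⟨w, hw⟩ := Finset.dvd_prod_of_mem (fun B => lX k B) hmemp
            rw [hw]
            refine Ideal.mul_mem_right _ _ (Ideal.subset_span ?_)
            left
            rfl
          · rw [map_mul, map_pow, aux_sig_X3, aux_sig_prod_lX]
    | zero => exact ⟨0, by simp, by simp⟩
    | add y z _ _ hy hz =>
        obtain ⟨G1, h1, e1⟩ := hy
        obtain ⟨G2, h2, e2⟩ := hz
        exact ⟨G1 + G2, fun P hP => Ideal.add_mem _ (h1 P hP) (h2 P hP),
          by rw [map_add, e1, e2, map_add, mul_add]⟩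
    | smul c y _ hy =>
        obtain ⟨G, h1, e1⟩ := hy
        refine ⟨aux_sig k c * G, fun P hP => Ideal.mul_mem_left _ _ (h1 P hP), ?_⟩
        rw [smul_eq_mul, map_mul, map_mul, aux_sig_idem, e1]
        ring
  obtain ⟨G, hGmem, hGsig⟩ := hmain f hfspan
  rw [hsigf] at hGsig
  have hGIX : G ∈ IX k Xs := by
    rw [IX, Ideal.mem_iInf]
    intro P
    rw [Ideal.mem_iInf]
    intro hP
    exact hGmem P hP
  have hdiff : F - G ∈ Ideal.span {(X 2 : MvPolynomial (Fin 4) k)} := by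
    have h1 := aux_sub_sig_mem F
    have h2 := aux_sub_sig_mem G
    have heq : F - G = (F - aux_sig k F) - (G - aux_sig k G) := by
      rw [hGsig, ← hF0]
      ring
    rw [heq]
    exact Ideal.sub_mem _ h1 h2
  have hFG : F = G + (F - G) := by ring
  rw [hFG]
  exact Submodule.add_mem_sup hGIX hdiff

end
end
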